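/- Let ⟨W,R⟩ be the disjoint union of the finite chains ⟨n,<⟩ for n ∈ ω, i.e. W = {(n,i) : n ∈ ω, i < n} and R (n,i) (m,j) ⟺ n = m and i < j. Although R is irreflexive, the ultrafilter extension of ⟨W,R⟩ has a reflexive point: there exists an ultrafilter u on W with R^ue u u. Consequently ⟨W,R⟩ is not elementarily equivalent to its ultrafilter extension. -/

import Mathlib

open Set Filter FirstOrder Language

/-- `R⁻(X)`: the set of elements having an `R`-successor in `X`. -/
def Rminus {W : Type*} (R : W → W → Prop) (X : Set W) : Set W := {w | ∃ s ∈ X, R w s}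

/-- `R⁺(X)`: the set of elements having an `R`-predecessor in `X`. -/
def Rplus {W : Type*} (R : W → W → Prop) (X : Set W) : Set W := {s | ∃ w ∈ X, R w s}

/-- The relation of the ultrafilter extension: `R^ue u v ↔ ∀ X ∈ v, R⁻(X) ∈ u`. -/
def ueRel {W : Type*} (R : W → W → Prop) (u v : Ultrafilter W) : Prop :=
  ∀ X ∈ v, Rminus R X ∈ u

/-- Out-degree `deg⁺(w)`, as an extended natural number. -/
noncomputable def degPlus {W : Type*} (R : W → W → Prop) (w : W) : ℕ∞ := {v | R w v}.encard

/-- In-degree `deg⁻(w)`, as an extended natural number. -/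
noncomputable def degMinus {W : Type*} (R : W → W → Prop) (w : W) : ℕ∞ := {v | R v w}.encard

/-- A directed graph is bounded if `deg(w) = deg⁺(w) + deg⁻(w)` is uniformly bounded. -/
def Bounded {W : Type*} (R : W → W → Prop) : Prop :=
  ∃ n : ℕ, ∀ w, degPlus R w + degMinus R w ≤ (n : ℕ∞)

/-- A directed graph `⟨W,R⟩` as a structure for the first-order language `L_R` with a
single binary relation symbol (`Language.graph`). -/
def grStruct {W : Type*} (R : W → W → Prop) : Language.graph.Structure W where
  RelMap | .adj => fun x => R (x 0) (x 1)

/-- `D` is ℵ₁-incomplete: some countable family of members of `D` has empty intersection. -/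
def Aleph1Incomplete {I : Type*} (D : Ultrafilter I) : Prop :=
  ∃ J : ℕ → Set I, (∀ n, J n ∈ D) ∧ ⋂ n, J n = ∅

/-- The `n`-Hull `⟨w⟩ⁿ`: `⟨w⟩⁰ = {w}`, `⟨w⟩^{i+1} = ⟨w⟩^i ∪ R⁺(⟨w⟩^i) ∪ R⁻(⟨w⟩^i)`. -/
def hull {W : Type*} (R : W → W → Prop) (w : W) : ℕ → Set W
  | 0 => {w}
  | n + 1 => hull R w n ∪ Rplus R (hull R w n) ∪ Rminus R (hull R w n)

/-- The ω-Hull `⟨w⟩^ω = ⋃ₙ ⟨w⟩ⁿ`. -/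
def hullOmega {W : Type*} (R : W → W → Prop) (w : W) : Set W := ⋃ n, hull R w n

/-- A pointed isomorphism between the induced subgraphs on `A ⊆ V` and `A' ⊆ V'`
sending the base point `a` to `a'`. -/
def PointedIso {V V' : Type*} (R : V → V → Prop) (R' : V' → V' → Prop)
    (A : Set V) (A' : Set V') (a : V) (a' : V') : Prop :=
  ∃ f : V → V', Set.BijOn f A A' ∧ f a = a' ∧
    ∀ x ∈ A, ∀ y ∈ A, (R x y ↔ R' (f x) (f y))

/-- The disjoint union of the finite chains `⟨n,<⟩`, `n ∈ ω`:
elements are pairs `(n,i)` with `i < n`. -/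
def Wchains : Type := {p : ℕ × ℕ // p.2 < p.1}

/-- `(n,i) R (m,j) ↔ n = m ∧ i < j`. -/
def Rchains (p q : Wchains) : Prop := p.1.1 = q.1.1 ∧ p.1.2 < q.1.2


noncomputable def Du : Ultrafilter ℕ := Filter.hyperfilter ℕ

def phi (i n : ℕ) : Wchains :=
  ⟨(max n (i+1), i), lt_of_lt_of_le (Nat.lt_succ_self i) (le_max_right _ _)⟩

lemma mem_ubind {α β : Type*} (f : Ultrafilter α) (m : α → Ultrafilter β) (s : Set β) :
    s ∈ f.bind m ↔ {a | s ∈ m a} ∈ f := Filter.mem_bind'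

noncomputable def uChains : Ultrafilter Wchains := Du.bind (fun i => Du.map (phi i))

lemma mem_uChains {X : Set Wchains} :
    X ∈ uChains ↔ {i | {n | phi i n ∈ X} ∈ Du} ∈ Du := by
  rw [uChains, mem_ubind]
  rfl

lemma refl_uChains : ueRel Rchains uChains uChains := by
  intro X hX
  rw [mem_uChains] at hX ⊢
  have hXinf : {i | {n | phi i n ∈ X} ∈ Du}.Infinite := by
    intro hfin
    exact Filter.notMem_hyperfilter_of_finite hfin hX
  have : {i | {n | phi i n ∈ Rminus Rchains X} ∈ Du} = Set.univ := by
    ext i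
    simp only [Set.mem_setOf_eq, Set.mem_univ, iff_true]
    obtain ⟨j, hjX, hij⟩ := hXinf.exists_gt i
    have hgt : {n | j < n} ∈ Du :=
      Filter.mem_hyperfilter_of_finite_compl (by
        have : {n | j < n}ᶜ = {n | n ≤ j} := by ext n; simp [not_lt]
        rw [this]; exact Set.finite_Iic j)
    have hsub : {n | phi j n ∈ X} ∩ {n | j < n} ⊆ {n | phi i n ∈ Rminus Rchains X} := by
      rintro n ⟨hn1, hn2⟩
      have hn2' : j < n := hn2
      refine ⟨phi j n, hn1, ?_⟩
      constructor
      · show max n (i+1) = max n (j+1)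
        rw [max_eq_left (by omega), max_eq_left (by omega)]
      · exact hij
    exact Filter.mem_of_superset (Filter.inter_mem hjX hgt) hsub
  rw [this]
  exact Filter.univ_mem

lemma Rchains_irrefl : ∀ p : Wchains, ¬ Rchains p p := fun p hp => lt_irrefl _ hp.2

/-- the disjoint union of the finite chains is irreflexive, but its
ultrafilter extension has a reflexive point; consequently it is not elementarily
equivalent to its ultrafilter extension. -/
theorem stmt_6 :
    (∀ p : Wchains, ¬ Rchains p p) ∧
    (∃ u : Ultrafilter Wchains, ueRel Rchains u u) ∧
    ¬ (letI := grStruct Rchains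
       letI := grStruct (ueRel Rchains)
       Language.graph.ElementarilyEquivalent Wchains (Ultrafilter Wchains)) := by
  refine ⟨Rchains_irrefl, ⟨uChains, refl_uChains⟩, ?_⟩
  intro h
  letI : Language.graph.Structure Wchains := grStruct Rchains
  letI : Language.graph.Structure (Ultrafilter Wchains) := grStruct (ueRel Rchains)
  have hiff := (Language.elementarilyEquivalent_iff.1 h) (Relations.irreflexive adj)
  rw [Relations.realize_irreflexive, Relations.realize_irreflexive] at hiff
  have h1 : Irreflexive fun x y : Wchains => Structure.RelMap adj ![x, y] :=
    fun p hp => Rchains_irrefl p hp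
  exact (hiff.1 ⟨h1⟩).irrefl uChains (refl_uChains)
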